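/- Let N, m^Σ, n^Σ be positive natural numbers with N = m^Σ + n^Σ. Let d₁,…,d_N > 0 be real numbers and D = diag(d₁,…,d_N). Let ν¹,…,ν^{m^Σ} ∈ ℝ^N be linearly independent, let e¹,…,e^{n^Σ} ∈ ℝ^N be linearly independent with ⟨e^k, ν^a⟩ = 0 for all k = 1,…,n^Σ and a = 1,…,m^Σ, and let c*₁,…,c*_N > 0 be real numbers. Let λ ∈ ℂ with Re λ ≥ 0 and b ≥ 0 be a real number with (λ, b) ≠ (0, 0). Then for every g ∈ ℂ^{n^Σ} and every h ∈ ℂ^{m^Σ} there exists a unique function v : [0,∞) → ℂ^N which is twice continuously differentiable, satisfies v(y) → 0 as y → ∞, solves the ordinary differential equations λ v_i(y) + d_i (b v_i(y) − v_i''(y)) = 0 for all y ≥ 0 and all i = 1,…,N, and satisfies the boundary conditions ⟨e^k, D v'(0)⟩ = g_k for k = 1,…,n^Σ and Σ_{i=1}^N (ν^a_i / c*_i) v_i(0) = h_a for a = 1,…,m^Σ. (This is the Lopatinskii–Shapiro condition for the linearisation of the fast-sorption–fast-surface-chemistry limit system.) -/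

import Mathlib

open Set Filter

namespace Stmt6Aux

lemma exp_hasDerivAt (c : ℂ) (y : ℝ) :
    HasDerivAt (fun t : ℝ => Complex.exp (c * t)) (c * Complex.exp (c * y)) y := by
  have h1 : HasDerivAt (fun t : ℝ => c * (t : ℂ)) c y := by
    simpa using (Complex.ofRealCLM.hasDerivAt (x := y)).const_mul c
  simpa [mul_comm] using h1.cexp

lemma sqrt_re_pos {z : ℂ} (hre : 0 ≤ z.re) (hz : z ≠ 0) : 0 < (z ^ (2⁻¹ : ℂ)).re := by
  rw [Complex.cpow_def_of_ne_zero hz, Complex.exp_re]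
  apply mul_pos (Real.exp_pos _)
  have him : (Complex.log z * 2⁻¹).im = z.arg / 2 := by
    simp [Complex.mul_im, Complex.log_im]
    ring
  rw [him]
  apply Real.cos_pos_of_mem_Ioo
  have h2 := abs_le.mp (Complex.abs_arg_le_pi_div_two_iff.mpr hre)
  have hπ := Real.pi_pos
  constructor <;> nlinarith [h2.1, h2.2]

lemma sqrt_sq (z : ℂ) : (z ^ (2⁻¹ : ℂ)) ^ 2 = z := by
  simpa using Complex.cpow_ofNat_inv_pow z 2

lemma tendsto_mul_exp {μ : ℂ} (hμ : 0 < μ.re) (c : ℂ) :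
    Tendsto (fun y : ℝ => c * Complex.exp (-μ * y)) atTop (nhds 0) := by
  rw [tendsto_zero_iff_norm_tendsto_zero]
  have heq : (fun y : ℝ => ‖c * Complex.exp (-μ * y)‖)
      = fun y : ℝ => ‖c‖ * Real.exp (-μ.re * y) := by
    funext y
    rw [norm_mul, Complex.norm_exp]
    simp [Complex.mul_re]
  rw [heq]
  have h1 : Tendsto (fun y : ℝ => -μ.re * y) atTop atBot := by
    apply Tendsto.const_mul_atTop_of_neg (by linarith : -μ.re < 0) tendsto_id
  simpa using (Real.tendsto_exp_atBot.comp h1).const_mul ‖c‖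

lemma eq_const_of_hasDerivWithinAt_zero {f : ℝ → ℂ}
    (hf : ∀ y ∈ Ici (0:ℝ), HasDerivWithinAt f 0 (Ici (0:ℝ)) y) :
    ∀ y ∈ Ici (0:ℝ), f y = f 0 := by
  intro y hy
  have hcont : ContinuousOn f (Icc 0 y) := fun x hx =>
    ((hf x hx.1).continuousWithinAt).mono (fun z hz => hz.1)
  exact constant_of_has_deriv_right_zero hcont
    (fun x hx => (hf x hx.1).mono (Ici_subset_Ici.mpr hx.1)) y (mem_Icc.mpr ⟨hy, le_refl y⟩)

lemma scalar_rep {μ : ℂ} (hμ : 0 < μ.re) {w w1 w2 : ℝ → ℂ}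
    (hw : ∀ y ∈ Ici (0:ℝ), HasDerivWithinAt w (w1 y) (Ici (0:ℝ)) y)
    (hw1 : ∀ y ∈ Ici (0:ℝ), HasDerivWithinAt w1 (w2 y) (Ici (0:ℝ)) y)
    (hode : ∀ y ∈ Ici (0:ℝ), w2 y = μ ^ 2 * w y)
    (hdec : Tendsto w atTop (nhds 0)) :
    (∀ y ∈ Ici (0:ℝ), w y = w 0 * Complex.exp (-μ * y)) ∧ w1 0 = -μ * w 0 := by
  have hμ0 : μ ≠ 0 := fun hh => by simp [hh] at hμ
  set c : ℂ := w1 0 + μ * w 0 with hc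
  have hψ : ∀ y ∈ Ici (0:ℝ), Complex.exp (-μ * y) * (w1 y + μ * w y) = c := by
    have h0 : ∀ y ∈ Ici (0:ℝ), HasDerivWithinAt
        (fun t : ℝ => Complex.exp (-μ * t) * (w1 t + μ * w t)) 0 (Ici (0:ℝ)) y := by
      intro y hy
      have h1 := ((exp_hasDerivAt (-μ) y).hasDerivWithinAt (s := Ici (0:ℝ))).mul
        ((hw1 y hy).add ((hw y hy).const_mul μ))
      refine h1.congr_deriv (Eq.symm ?_)
      rw [hode y hy, Pi.add_apply]; ring
    intro y hy
    have h2 := eq_const_of_hasDerivWithinAt_zero h0 y hy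
    simpa [hc] using h2
  have hexp1 : ∀ y : ℝ, Complex.exp (-μ * y) * Complex.exp (μ * y) = 1 := by
    intro y
    rw [← Complex.exp_add, show -μ * (y:ℂ) + μ * y = 0 by ring, Complex.exp_zero]
  have hexp2 : ∀ y : ℝ, Complex.exp (μ * y) * Complex.exp (μ * y)
      = Complex.exp (2 * μ * y) := by
    intro y
    rw [← Complex.exp_add]; ring_nf
  have hexp3 : ∀ y : ℝ, Complex.exp (-μ * y) * Complex.exp (2 * μ * y)
      = Complex.exp (μ * y) := by
    intro y
    rw [← Complex.exp_add, show -μ * (y:ℂ) + 2 * μ * y = μ * y by ring]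
  have h3 : ∀ y ∈ Ici (0:ℝ), w1 y + μ * w y = c * Complex.exp (μ * y) := by
    intro y hy
    have h2 := hψ y hy
    calc w1 y + μ * w y
        = (Complex.exp (μ * y) * Complex.exp (-μ * y)) * (w1 y + μ * w y) := by
          rw [mul_comm (Complex.exp (μ * (y:ℂ))), hexp1 y, one_mul]
      _ = Complex.exp (μ * y) * (Complex.exp (-μ * y) * (w1 y + μ * w y)) := by ring
      _ = c * Complex.exp (μ * y) := by rw [h2]; ring
  set A : ℂ := c / (2 * μ) with hA
  have h5 : A * (2 * μ) = c := by
    rw [hA]; field_simp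
  have hχ : ∀ y ∈ Ici (0:ℝ),
      Complex.exp (μ * y) * w y - A * Complex.exp (2 * μ * y) = w 0 - A := by
    have h0 : ∀ y ∈ Ici (0:ℝ), HasDerivWithinAt
        (fun t : ℝ => Complex.exp (μ * t) * w t - A * Complex.exp (2 * μ * t))
        0 (Ici (0:ℝ)) y := by
      intro y hy
      have h1 := (((exp_hasDerivAt μ y).hasDerivWithinAt (s := Ici (0:ℝ))).mul (hw y hy)).sub
        (((exp_hasDerivAt (2*μ) y).hasDerivWithinAt (s := Ici (0:ℝ))).const_mul A)
      refine h1.congr_deriv (Eq.symm ?_)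
      have h4 := hexp2 y
      have h3' := h3 y hy
      linear_combination (-(Complex.exp (μ*(y:ℂ)))) * h3' - c * h4
        + Complex.exp (2*μ*(y:ℂ)) * h5
    intro y hy
    have h2 := eq_const_of_hasDerivWithinAt_zero h0 y hy
    simpa using h2
  have hrep : ∀ y ∈ Ici (0:ℝ),
      w y = (w 0 - A) * Complex.exp (-μ * y) + A * Complex.exp (μ * y) := by
    intro y hy
    have h2 := hχ y hy
    have h4 := hexp1 y
    have h6 := hexp3 y
    linear_combination Complex.exp (-μ*(y:ℂ)) * h2 - (w y) * h4 + A * h6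
  have hA0 : A = 0 := by
    have h1 := tendsto_mul_exp hμ (w 0 - A)
    have h2 : Tendsto (fun y : ℝ => A * Complex.exp (μ * y)) atTop (nhds 0) := by
      have heq : (fun y : ℝ => A * Complex.exp (μ * y))
          =ᶠ[atTop] fun y => w y - (w 0 - A) * Complex.exp (-μ * y) := by
        filter_upwards [eventually_ge_atTop (0:ℝ)] with y hy
        rw [hrep y hy]; ring
      exact Tendsto.congr' heq.symm (by simpa using hdec.sub h1)
    have h3 : ∀ᶠ y : ℝ in atTop, ‖A‖ ≤ ‖A * Complex.exp (μ * y)‖ := by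
      filter_upwards [eventually_ge_atTop (0:ℝ)] with y hy
      rw [norm_mul, Complex.norm_exp]
      have hre : (μ * (y:ℂ)).re = μ.re * y := by simp [Complex.mul_re]
      rw [hre]
      nlinarith [Real.one_le_exp (by positivity : (0:ℝ) ≤ μ.re * y), norm_nonneg A]
    have h4 : ‖A‖ ≤ 0 := ge_of_tendsto (by simpa using h2.norm) h3
    simpa using le_antisymm h4 (norm_nonneg A)
  have hc0 : c = 0 := by
    rw [← h5, hA0, zero_mul]
  constructor
  · intro y hy
    have := hrep y hy
    rw [hA0] at this
    simpa using this
  · have : w1 0 + μ * w 0 = 0 := by rw [← hc, hc0]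
    linear_combination this

lemma mem_span_e {N mS nS : ℕ} (hN : N = mS + nS)
    {ν : Fin mS → (Fin N → ℝ)} (hν : LinearIndependent ℝ ν)
    {e : Fin nS → (Fin N → ℝ)} (he : LinearIndependent ℝ e)
    (horth : ∀ k a, ∑ i, e k i * ν a i = 0)
    {x : Fin N → ℝ} (hx : ∀ a, ∑ i, ν a i * x i = 0) :
    ∃ β : Fin nS → ℝ, ∀ i, x i = ∑ k, β k * e k i := by
  classical
  set E := EuclideanSpace ℝ (Fin N)
  let φ : (Fin N → ℝ) ≃ₗ[ℝ] E := (WithLp.linearEquiv 2 ℝ (Fin N → ℝ)).symm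
  let ν' : Fin mS → E := fun a => φ (ν a)
  let e' : Fin nS → E := fun k => φ (e k)
  have happ : ∀ (u : Fin N → ℝ) (i : Fin N), φ u i = u i := fun u i => rfl
  have hinner : ∀ (u w : Fin N → ℝ), (inner ℝ (φ u) (φ w) : ℝ) = ∑ i, u i * w i := by
    intro u w
    rw [PiLp.inner_apply]
    simp [happ, RCLike.inner_apply]
    exact Finset.sum_congr rfl fun i _ => mul_comm _ _
  have hν' : LinearIndependent ℝ ν' := hν.map' φ.toLinearMap φ.ker
  have he' : LinearIndependent ℝ e' := he.map' φ.toLinearMap φ.ker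
  set V : Submodule ℝ E := Submodule.span ℝ (Set.range ν') with hV
  set W : Submodule ℝ E := Submodule.span ℝ (Set.range e') with hW
  have horthgen : ∀ (z : E), (∀ a, (inner ℝ (ν' a) z : ℝ) = 0) → z ∈ Vᗮ := by
    intro z hz
    rw [Submodule.mem_orthogonal]
    intro u hu
    induction hu using Submodule.span_induction with
    | mem u hu => obtain ⟨a, rfl⟩ := hu; exact hz a
    | zero => simp
    | add u v _ _ h1 h2 => rw [inner_add_left, h1, h2, add_zero]
    | smul r u _ h1 => rw [real_inner_smul_left, h1, mul_zero]
  have hWle : W ≤ Vᗮ := by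
    rw [hW, Submodule.span_le]
    rintro _ ⟨k, rfl⟩
    apply horthgen
    intro a
    rw [hinner]
    calc ∑ i, ν a i * e k i = ∑ i, e k i * ν a i := by
          exact Finset.sum_congr rfl fun i _ => mul_comm _ _
      _ = 0 := horth k a
  have hdimV : Module.finrank ℝ V = mS := by
    rw [hV, finrank_span_eq_card hν', Fintype.card_fin]
  have hdimW : Module.finrank ℝ W = nS := by
    rw [hW, finrank_span_eq_card he', Fintype.card_fin]
  have hdimE : Module.finrank ℝ E = N := finrank_euclideanSpace_fin
  have hdimVo : Module.finrank ℝ (Vᗮ) = nS := by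
    have := Submodule.finrank_add_finrank_orthogonal V
    rw [hdimV, hdimE] at this
    omega
  have hWV : W = Vᗮ := Submodule.eq_of_le_of_finrank_le hWle (by rw [hdimVo, hdimW])
  have hxV : φ x ∈ Vᗮ := by
    apply horthgen
    intro a
    rw [hinner]
    exact hx a
  rw [← hWV, hW, Submodule.mem_span_range_iff_exists_fun] at hxV
  obtain ⟨β, hβ⟩ := hxV
  refine ⟨β, fun i => ?_⟩
  have h2 := congrArg (fun z : E => φ.symm z i) hβ
  simp only [map_sum, map_smul, LinearEquiv.symm_apply_apply] at h2
  simpa [Finset.sum_apply, smul_eq_mul, e'] using h2.symm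

lemma key_inj {N mS nS : ℕ} (hN : N = mS + nS) {d : Fin N → ℝ} (hd : ∀ i, 0 < d i)
    {ν : Fin mS → Fin N → ℝ} (hν : LinearIndependent ℝ ν)
    {e : Fin nS → Fin N → ℝ} (he : LinearIndependent ℝ e)
    (horth : ∀ k a, ∑ i, e k i * ν a i = 0)
    {cstar : Fin N → ℝ} (hc : ∀ i, 0 < cstar i)
    {μ : Fin N → ℂ} (hμ : ∀ i, 0 < (μ i).re)
    {B : Fin N → ℂ}
    (h1 : ∀ k, ∑ i, (e k i : ℂ) * ((d i : ℂ) * (μ i * B i)) = 0)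
    (h2 : ∀ a, ∑ i, ((ν a i / cstar i : ℝ) : ℂ) * B i = 0) :
    B = 0 := by
  classical
  set xr : Fin N → ℝ := fun i => (B i).re / cstar i with hxr
  set xi : Fin N → ℝ := fun i => (B i).im / cstar i with hxi
  have hcne : ∀ i, cstar i ≠ 0 := fun i => (hc i).ne'
  have hxra : ∀ a, ∑ i, ν a i * xr i = 0 := by
    intro a
    have := congrArg Complex.re (h2 a)
    rw [Complex.re_sum] at this
    simp only [Complex.mul_re, Complex.ofReal_re, Complex.ofReal_im, zero_mul, sub_zero,
      Complex.zero_re] at this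
    rw [← this]
    exact Finset.sum_congr rfl fun i _ => by rw [hxr]; ring
  have hxia : ∀ a, ∑ i, ν a i * xi i = 0 := by
    intro a
    have := congrArg Complex.im (h2 a)
    rw [Complex.im_sum] at this
    simp only [Complex.mul_im, Complex.ofReal_re, Complex.ofReal_im, zero_mul, add_zero,
      Complex.zero_im] at this
    rw [← this]
    exact Finset.sum_congr rfl fun i _ => by rw [hxi]; ring
  obtain ⟨βr, hβr⟩ := mem_span_e hN hν he horth hxra
  obtain ⟨βi, hβi⟩ := mem_span_e hN hν he horth hxia
  have hkey : ∀ (r : Fin N → ℝ) (β : Fin nS → ℝ), (∀ i, r i = ∑ k, β k * e k i) →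
      ∑ i, ((d i : ℂ) * μ i * B i) * (r i : ℂ) = 0 := by
    intro r β hr
    calc ∑ i, ((d i : ℂ) * μ i * B i) * (r i : ℂ)
        = ∑ i, ∑ k, (β k : ℂ) * ((e k i : ℂ) * ((d i : ℂ) * (μ i * B i))) := by
          refine Finset.sum_congr rfl fun i _ => ?_
          rw [hr i]
          push_cast
          rw [Finset.mul_sum]
          refine Finset.sum_congr rfl fun k _ => by ring
      _ = ∑ k, (β k : ℂ) * ∑ i, (e k i : ℂ) * ((d i : ℂ) * (μ i * B i)) := by
          rw [Finset.sum_comm]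
          exact Finset.sum_congr rfl fun k _ => by rw [Finset.mul_sum]
      _ = 0 := by simp [h1]
  have hS0 : ∑ i, ((d i : ℂ) * μ i * B i) * ((xr i : ℂ) - Complex.I * (xi i : ℂ)) = 0 := by
    have hr := hkey xr βr hβr
    have hi := hkey xi βi hβi
    calc ∑ i, ((d i : ℂ) * μ i * B i) * ((xr i : ℂ) - Complex.I * (xi i : ℂ))
        = (∑ i, ((d i : ℂ) * μ i * B i) * (xr i : ℂ))
          - Complex.I * ∑ i, ((d i : ℂ) * μ i * B i) * (xi i : ℂ) := by
          rw [Finset.mul_sum, ← Finset.sum_sub_distrib]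
          exact Finset.sum_congr rfl fun i _ => by ring
      _ = 0 := by rw [hr, hi]; ring
  have hterm : ∀ i, ((d i : ℂ) * μ i * B i) * ((xr i : ℂ) - Complex.I * (xi i : ℂ))
      = ((d i * (Complex.normSq (B i)) / cstar i : ℝ) : ℂ) * μ i := by
    intro i
    have hcc : (cstar i : ℂ) ≠ 0 := by exact_mod_cast hcne i
    have hBconj : B i * ((((B i).re : ℝ) : ℂ) - Complex.I * (((B i).im : ℝ) : ℂ))
        = (Complex.normSq (B i) : ℂ) := by
      rw [← Complex.mul_conj (B i)]
      congr 1
      apply Complex.ext <;> simp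
    rw [hxr, hxi]
    push_cast
    linear_combination ((d i : ℂ) * μ i / (cstar i : ℂ)) * hBconj
  have hsum : ∑ i, ((d i * Complex.normSq (B i) / cstar i : ℝ) : ℂ) * μ i = 0 := by
    rw [← hS0]
    exact Finset.sum_congr rfl fun i _ => (hterm i).symm
  have hre : ∑ i, (d i * Complex.normSq (B i) / cstar i) * (μ i).re = 0 := by
    have h3 := congrArg Complex.re hsum
    rw [Complex.re_sum] at h3
    simpa [Complex.mul_re] using h3
  have hnn : ∀ i ∈ Finset.univ, 0 ≤ (d i * Complex.normSq (B i) / cstar i) * (μ i).re :=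
    fun i _ => mul_nonneg (div_nonneg (mul_nonneg (hd i).le (Complex.normSq_nonneg _))
      (hc i).le) (hμ i).le
  have hall := (Finset.sum_eq_zero_iff_of_nonneg hnn).mp hre
  funext i
  show B i = 0
  rw [← Complex.normSq_eq_zero]
  have hi := hall i (Finset.mem_univ i)
  rcases mul_eq_zero.mp hi with hcase | hcase
  · have hdi := hd i
    have hci := hcne i
    field_simp at hcase
    rw [mul_zero] at hcase
    rcases mul_eq_zero.mp hcase with hcase | hcase
    · exact absurd hcase hdi.ne'
    · exact hcase
  · exact absurd hcase (hμ i).ne'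

/-- The boundary-condition linear map. -/
noncomputable def Lmap {N mS nS : ℕ} (e : Fin nS → Fin N → ℝ) (ν : Fin mS → Fin N → ℝ)
    (cstar d : Fin N → ℝ) (μ : Fin N → ℂ) :
    (Fin N → ℂ) →ₗ[ℂ] ((Fin nS → ℂ) × (Fin mS → ℂ)) where
  toFun B := (fun k => ∑ i, (e k i : ℂ) * ((d i : ℂ) * (-(μ i) * B i)),
              fun a => ∑ i, ((ν a i / cstar i : ℝ) : ℂ) * B i)
  map_add' B C := by
    refine Prod.ext ?_ ?_ <;> funext j <;>
      simp [Prod.fst_add, Prod.snd_add, Pi.add_apply, mul_add, Finset.sum_add_distrib]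
  map_smul' t B := by
    refine Prod.ext ?_ ?_ <;> funext j <;>
      simp only [Prod.smul_fst, Prod.smul_snd, Pi.smul_apply, smul_eq_mul,
        RingHom.id_apply, Finset.mul_sum] <;>
      exact Finset.sum_congr rfl fun i _ => by ring

end Stmt6Aux

/-- Lopatinskii–Shapiro condition for the linearisation of the
fast-sorption–fast-surface-chemistry limit system: unique solvability of the
boundary-value ODE system on `[0,∞)`. -/
theorem stmt6 (N mS nS : ℕ) (hmS : 0 < mS) (hnS : 0 < nS) (hN : N = mS + nS)
    (d : Fin N → ℝ) (hd : ∀ i, 0 < d i)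
    (ν : Fin mS → (Fin N → ℝ)) (hν : LinearIndependent ℝ ν)
    (e : Fin nS → (Fin N → ℝ)) (he : LinearIndependent ℝ e)
    (horth : ∀ k a, ∑ i, e k i * ν a i = 0)
    (cstar : Fin N → ℝ) (hcstar : ∀ i, 0 < cstar i)
    (lam : ℂ) (hlam : 0 ≤ lam.re) (b : ℝ) (hb : 0 ≤ b)
    (hnz : ¬ (lam = 0 ∧ b = 0))
    (g : Fin nS → ℂ) (h : Fin mS → ℂ) :
    ∃ v : ℝ → (Fin N → ℂ),
      (ContDiffOn ℝ 2 v (Ici 0) ∧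
        Tendsto v atTop (nhds 0) ∧
        (∀ y ∈ Ici (0 : ℝ), ∀ i,
          lam * v y i + (d i : ℂ) * ((b : ℂ) * v y i
            - iteratedDerivWithin 2 v (Ici 0) y i) = 0) ∧
        (∀ k, ∑ i, (e k i : ℂ) * ((d i : ℂ) * derivWithin v (Ici 0) 0 i) = g k) ∧
        (∀ a, ∑ i, ((ν a i / cstar i : ℝ) : ℂ) * v 0 i = h a)) ∧
      ∀ u : ℝ → (Fin N → ℂ),
        (ContDiffOn ℝ 2 u (Ici 0) ∧
          Tendsto u atTop (nhds 0) ∧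
          (∀ y ∈ Ici (0 : ℝ), ∀ i,
            lam * u y i + (d i : ℂ) * ((b : ℂ) * u y i
              - iteratedDerivWithin 2 u (Ici 0) y i) = 0) ∧
          (∀ k, ∑ i, (e k i : ℂ) * ((d i : ℂ) * derivWithin u (Ici 0) 0 i) = g k) ∧
          (∀ a, ∑ i, ((ν a i / cstar i : ℝ) : ℂ) * u 0 i = h a)) →
        EqOn v u (Ici 0) := by
  classical
  open Stmt6Aux in
  have hs : UniqueDiffOn ℝ (Ici (0:ℝ)) := uniqueDiffOn_Ici 0
  have hdne : ∀ i, (d i : ℂ) ≠ 0 := fun i => by exact_mod_cast (hd i).ne'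
  set z : Fin N → ℂ := fun i => (lam + (d i : ℂ) * (b : ℂ)) / (d i : ℂ) with hzdef
  have hzre : ∀ i, 0 ≤ (z i).re := by
    intro i
    rw [hzdef]
    have : ((lam + (d i : ℂ) * (b : ℂ)) / (d i : ℂ)).re = (lam.re + d i * b) / d i := by
      rw [Complex.div_ofReal_re]
      norm_num [Complex.add_re, Complex.ofReal_mul]
    rw [this]
    have := hd i
    positivity
  have hzne : ∀ i, z i ≠ 0 := by
    intro i hzero
    rw [hzdef, div_eq_zero_iff] at hzero
    rcases hzero with hzero | hzero
    · have hre := congrArg Complex.re hzero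
      simp only [Complex.add_re, Complex.zero_re] at hre
      have him : (((d i : ℂ)) * (b:ℂ)).re = d i * b := by
        norm_num [Complex.ofReal_mul]
      rw [him] at hre
      have hdb : d i * b ≤ 0 := by linarith
      have hb0 : b = 0 := by nlinarith [hd i]
      apply hnz
      refine ⟨?_, hb0⟩
      rw [hb0] at hzero
      simpa using hzero
    · exact (hdne i) hzero
  set μ : Fin N → ℂ := fun i => (z i) ^ (2⁻¹ : ℂ) with hμdef
  have hμre : ∀ i, 0 < (μ i).re := fun i => Stmt6Aux.sqrt_re_pos (hzre i) (hzne i)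
  have hμsq : ∀ i, (d i : ℂ) * (μ i) ^ 2 = lam + (d i : ℂ) * (b : ℂ) := by
    intro i
    rw [hμdef]
    simp only
    rw [Stmt6Aux.sqrt_sq (z i), hzdef]
    simp only
    rw [mul_comm, div_mul_cancel₀ _ (hdne i)]
  set L := Stmt6Aux.Lmap e ν cstar d μ with hLdef
  have hLinj : Function.Injective L := by
    rw [← LinearMap.ker_eq_bot]
    rw [Submodule.eq_bot_iff]
    intro B hB
    rw [LinearMap.mem_ker] at hB
    have hfst : ∀ k, ∑ i, (e k i : ℂ) * ((d i : ℂ) * (-(μ i) * B i)) = 0 := by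
      intro k
      have := congrArg (fun p => p.1 k) hB
      simpa [hLdef, Stmt6Aux.Lmap] using this
    have hsnd : ∀ a, ∑ i, ((ν a i / cstar i : ℝ) : ℂ) * B i = 0 := by
      intro a
      have := congrArg (fun p => p.2 a) hB
      simpa [hLdef, Stmt6Aux.Lmap] using this
    refine Stmt6Aux.key_inj hN hd hν he horth hcstar hμre ?_ hsnd
    intro k
    have h1 := hfst k
    have : ∑ i, (e k i : ℂ) * ((d i : ℂ) * (μ i * B i))
        = -∑ i, (e k i : ℂ) * ((d i : ℂ) * (-(μ i) * B i)) := by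
      rw [← Finset.sum_neg_distrib]
      exact Finset.sum_congr rfl fun i _ => by ring
    rw [this, h1, neg_zero]
  have hLsurj : Function.Surjective L := by
    have hfr : Module.finrank ℂ (Fin N → ℂ)
        = Module.finrank ℂ ((Fin nS → ℂ) × (Fin mS → ℂ)) := by
      rw [Module.finrank_prod, Module.finrank_fintype_fun_eq_card,
        Module.finrank_fintype_fun_eq_card, Module.finrank_fintype_fun_eq_card,
        Fintype.card_fin, Fintype.card_fin, Fintype.card_fin]
      omega
    exact (LinearMap.injective_iff_surjective_of_finrank_eq_finrank hfr).mp hLinj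
  obtain ⟨B, hB⟩ := hLsurj (g, h)
  have hBg : ∀ k, ∑ i, (e k i : ℂ) * ((d i : ℂ) * (-(μ i) * B i)) = g k := by
    intro k
    have := congrArg (fun p => p.1 k) hB
    simpa [hLdef, Stmt6Aux.Lmap] using this
  have hBh : ∀ a, ∑ i, ((ν a i / cstar i : ℝ) : ℂ) * B i = h a := by
    intro a
    have := congrArg (fun p => p.2 a) hB
    simpa [hLdef, Stmt6Aux.Lmap] using this
  -- the solution
  set v : ℝ → (Fin N → ℂ) := fun y i => B i * Complex.exp (-(μ i) * y) with hvdef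
  set v1 : ℝ → (Fin N → ℂ) := fun y i => B i * (-(μ i) * Complex.exp (-(μ i) * y)) with hv1def
  set v2 : ℝ → (Fin N → ℂ) :=
    fun y i => B i * (-(μ i) * (-(μ i) * Complex.exp (-(μ i) * y))) with hv2def
  have hv : ∀ y : ℝ, HasDerivAt v (v1 y) y := by
    intro y
    apply hasDerivAt_pi.mpr
    intro i
    exact (Stmt6Aux.exp_hasDerivAt (-(μ i)) y).const_mul (B i)
  have hv1 : ∀ y : ℝ, HasDerivAt v1 (v2 y) y := by
    intro y
    apply hasDerivAt_pi.mpr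
    intro i
    exact ((Stmt6Aux.exp_hasDerivAt (-(μ i)) y).const_mul (-(μ i))).const_mul (B i)
  have hdvw : ∀ y ∈ Ici (0:ℝ), derivWithin v (Ici 0) y = v1 y :=
    fun y hy => ((hv y).hasDerivWithinAt).derivWithin (hs y hy)
  have hd2 : ∀ y ∈ Ici (0:ℝ), iteratedDerivWithin 2 v (Ici 0) y = v2 y := by
    intro y hy
    have hit : iteratedDerivWithin 2 v (Ici 0) y = derivWithin (derivWithin v (Ici 0)) (Ici 0) y := by
      rw [iteratedDerivWithin_eq_iterate]
      rfl
    rw [hit, derivWithin_congr hdvw (hdvw y hy)]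
    exact ((hv1 y).hasDerivWithinAt).derivWithin (hs y hy)
  have hvcd : ContDiff ℝ 2 v := by
    apply contDiff_pi.mpr
    intro i
    apply ContDiff.mul contDiff_const
    exact (Complex.contDiff_exp (𝕜 := ℝ)).comp
      (ContDiff.mul contDiff_const Complex.ofRealCLM.contDiff)
  refine ⟨v, ⟨hvcd.contDiffOn, ?_, ?_, ?_, ?_⟩, ?_⟩
  · -- decay
    rw [tendsto_pi_nhds]
    intro i
    have htd := Stmt6Aux.tendsto_mul_exp (hμre i) (B i)
    simpa [hvdef, neg_mul] using htd
  · -- ODE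
    intro y hy i
    rw [hd2 y hy]
    show lam * (B i * Complex.exp (-(μ i) * y)) + (d i : ℂ) *
      ((b:ℂ) * (B i * Complex.exp (-(μ i) * y))
        - B i * (-(μ i) * (-(μ i) * Complex.exp (-(μ i) * y)))) = 0
    linear_combination (-(B i * Complex.exp (-(μ i) * (y:ℂ)))) * hμsq i
  · -- boundary g
    intro k
    rw [hdvw 0 Set.self_mem_Ici, ← hBg k]
    refine Finset.sum_congr rfl fun i _ => ?_
    show (e k i : ℂ) * ((d i : ℂ) * (B i * (-(μ i) * Complex.exp (-(μ i) * ((0:ℝ):ℂ)))))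
      = (e k i : ℂ) * ((d i : ℂ) * (-(μ i) * B i))
    simp only [Complex.ofReal_zero, mul_zero, Complex.exp_zero, mul_one]
    ring
  · -- boundary h
    intro a
    rw [← hBh a]
    refine Finset.sum_congr rfl fun i _ => ?_
    show ((ν a i / cstar i : ℝ) : ℂ) * (B i * Complex.exp (-(μ i) * ((0:ℝ):ℂ)))
      = ((ν a i / cstar i : ℝ) : ℂ) * B i
    simp only [Complex.ofReal_zero, mul_zero, Complex.exp_zero, mul_one]
  · -- uniqueness
    rintro u ⟨hu1, hu2, hu3, hu4, hu5⟩
    set U1 : ℝ → (Fin N → ℂ) := derivWithin u (Ici 0) with hU1def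
    have hudiff : DifferentiableOn ℝ u (Ici 0) := hu1.differentiableOn (by norm_num)
    have hU1cd : ContDiffOn ℝ 1 U1 (Ici 0) := hu1.derivWithin hs (by norm_num)
    have hU1diff : DifferentiableOn ℝ U1 (Ici 0) := hU1cd.differentiableOn (by norm_num)
    have hrep : ∀ i, (∀ y ∈ Ici (0:ℝ), u y i = u 0 i * Complex.exp (-(μ i) * y))
        ∧ U1 0 i = -(μ i) * u 0 i := by
      intro i
      have hw : ∀ y ∈ Ici (0:ℝ), HasDerivWithinAt (fun t => u t i) (U1 y i) (Ici 0) y :=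
        fun y hy => hasDerivWithinAt_pi.mp ((hudiff y hy).hasDerivWithinAt) i
      have hw1 : ∀ y ∈ Ici (0:ℝ),
          HasDerivWithinAt (fun t => U1 t i) (derivWithin U1 (Ici 0) y i) (Ici 0) y :=
        fun y hy => hasDerivWithinAt_pi.mp ((hU1diff y hy).hasDerivWithinAt) i
      have hode : ∀ y ∈ Ici (0:ℝ), derivWithin U1 (Ici 0) y i = (μ i) ^ 2 * u y i := by
        intro y hy
        have hit : iteratedDerivWithin 2 u (Ici 0) y = derivWithin U1 (Ici 0) y := by
          rw [iteratedDerivWithin_eq_iterate]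
          rfl
        have h5 := hu3 y hy i
        rw [hit] at h5
        have h6 : (d i : ℂ) * (derivWithin U1 (Ici 0) y i)
            = (d i : ℂ) * ((μ i) ^ 2 * u y i) := by
          linear_combination -h5 - (u y i) * hμsq i
        exact mul_left_cancel₀ (hdne i) h6
      have hdec : Tendsto (fun y => u y i) atTop (nhds 0) := by
        simpa using tendsto_pi_nhds.mp hu2 i
      exact Stmt6Aux.scalar_rep (hμre i) hw hw1 hode hdec
    have hLU : L (fun i => u 0 i) = (g, h) := by
      refine Prod.ext ?_ ?_
      · funext k
        show ∑ i, (e k i : ℂ) * ((d i : ℂ) * (-(μ i) * u 0 i)) = g k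
        rw [← hu4 k]
        refine Finset.sum_congr rfl fun i _ => ?_
        rw [← (hrep i).2]
      · funext a
        show ∑ i, ((ν a i / cstar i : ℝ) : ℂ) * u 0 i = h a
        exact hu5 a
    have huB : (fun i => u 0 i) = B := hLinj (hLU.trans hB.symm)
    intro y hy
    funext i
    show B i * Complex.exp (-(μ i) * y) = u y i
    rw [← congrFun huB i]
    exact ((hrep i).1 y hy).symm
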